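/- Let A be a symmetric n×n real matrix, and let d₁,…,d_s ≥ 0 with each d_i ≤ B for some B > 0, with multiplicities m₁,…,m_s and an extra block of size m_{s+1} (Σ m_i = n). Suppose A commutes with D = diag(d₁ I_{m₁}, …, d_s I_{m_s}, 0_{m_{s+1}}) (the curvature-adapted condition). Then the number of t ∈ (0, π/B) for which the matrix diag(d₁cot(t d₁) I_{m₁}, …, d_s cot(t d_s) I_{m_s}, (1/t) I_{m_{s+1}}) − A is singular is at most (s+1)·n, where d_i cot(t d_i) is interpreted as 1/t when d_i = 0. -/

import Mathlib

open Polynomial in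
lemma charpolyEvalAux {n : ℕ} (A : Matrix (Fin n) (Fin n) ℝ) (μ : ℝ) :
    A.charpoly.eval μ = (Matrix.diagonal (fun _ => μ) - A).det := by
  rw [Matrix.charpoly, ← Polynomial.coe_evalRingHom, RingHom.map_det]
  congr 1
  ext i j
  by_cases h : i = j <;>
    simp [Matrix.charmatrix_apply, Matrix.diagonal_apply, h, Matrix.sub_apply]

noncomputable def gFun (v t : ℝ) : ℝ := if v = 0 then 1 / t else v * Real.cot (t * v)

lemma gInjOn (B v : ℝ) (hv0 : 0 ≤ v) (hvB : v ≤ B) :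
    Set.InjOn (gFun v) (Set.Ioo 0 (Real.pi / B)) := by
  intro t1 ht1 t2 ht2 h
  unfold gFun at h
  by_cases hv : v = 0
  · simp only [hv, if_true] at h
    rw [div_eq_div_iff ht1.1.ne' ht2.1.ne'] at h
    linarith
  · simp only [hv, if_neg, not_false_iff] at h
    have hvpos : 0 < v := lt_of_le_of_ne hv0 (Ne.symm hv)
    have hπB : Real.pi / B ≤ Real.pi / v :=
      div_le_div_of_nonneg_left Real.pi_pos.le hvpos hvB
    have h1 : 0 < t1 * v := mul_pos ht1.1 hvpos
    have h2 : 0 < t2 * v := mul_pos ht2.1 hvpos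
    have h1' : t1 * v < Real.pi := by
      have := lt_of_lt_of_le ht1.2 hπB
      calc t1 * v < (Real.pi / v) * v := mul_lt_mul_of_pos_right this hvpos
        _ = Real.pi := div_mul_cancel₀ _ hvpos.ne'
    have h2' : t2 * v < Real.pi := by
      have := lt_of_lt_of_le ht2.2 hπB
      calc t2 * v < (Real.pi / v) * v := mul_lt_mul_of_pos_right this hvpos
        _ = Real.pi := div_mul_cancel₀ _ hvpos.ne'
    have hcot : Real.cot (t1 * v) = Real.cot (t2 * v) := mul_left_cancel₀ hv h
    have hs1 : 0 < Real.sin (t1 * v) := Real.sin_pos_of_pos_of_lt_pi h1 h1'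
    have hs2 : 0 < Real.sin (t2 * v) := Real.sin_pos_of_pos_of_lt_pi h2 h2'
    rw [Real.cot_eq_cos_div_sin, Real.cot_eq_cos_div_sin,
      div_eq_div_iff hs1.ne' hs2.ne'] at hcot
    have hsin : Real.sin (t1 * v - t2 * v) = 0 := by
      rw [Real.sin_sub]; linarith
    have hlt : t1 * v - t2 * v < Real.pi := by linarith
    have hgt : -Real.pi < t1 * v - t2 * v := by linarith
    have h0 := (Real.sin_eq_zero_iff_of_lt_of_lt hgt hlt).mp hsin
    have : t1 * v = t2 * v := by linarith
    exact mul_right_cancel₀ hvpos.ne' this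

/-- linear-algebraic core of Corollary 2.5. `A` is a symmetric `n×n`
matrix commuting with the diagonal matrix of values `δ i` (`0 ≤ δ i ≤ B`, the zero
entries forming the extra block). The number of `t ∈ (0, π/B)` for which
`diag(δᵢ cot(t δᵢ)) − A` (with `δᵢ cot(t δᵢ)` read as `1/t` when `δᵢ = 0`)
is singular is at most `(s+1)·n`, where `s` is the number of distinct nonzero
values among the `δ i`. -/
theorem stmt3 {n : ℕ} (B : ℝ) (hB : 0 < B)
    (δ : Fin n → ℝ) (hδ0 : ∀ i, 0 ≤ δ i) (hδB : ∀ i, δ i ≤ B)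
    (A : Matrix (Fin n) (Fin n) ℝ) (hA : A.IsSymm)
    (hcomm : A * Matrix.diagonal δ = Matrix.diagonal δ * A) :
    ∃ S : Finset ℝ,
      S.card ≤ (((Finset.univ.image δ).erase 0).card + 1) * n ∧
      ∀ t ∈ Set.Ioo (0 : ℝ) (Real.pi / B),
        (Matrix.diagonal (fun i => if δ i = 0 then 1 / t else δ i * Real.cot (t * δ i))
            - A).det = 0 → t ∈ S := by
  classical
  set V : Finset ℝ := insert 0 (Finset.univ.image δ) with hV
  set E : Finset ℝ := A.charpoly.roots.toFinset with hEdef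
  set φ : ℝ → ℝ → ℝ := fun v lam =>
    if h : ∃ t ∈ Set.Ioo (0:ℝ) (Real.pi / B), gFun v t = lam then h.choose else 0 with hφ
  refine ⟨(V ×ˢ E).image fun p => φ p.1 p.2, ?_, ?_⟩
  · have hVcard : V.card ≤ ((Finset.univ.image δ).erase 0).card + 1 := by
      have : V = insert 0 ((Finset.univ.image δ).erase 0) := by
        ext a
        simp only [hV, Finset.mem_insert, Finset.mem_erase]
        tauto
      rw [this]
      exact Finset.card_insert_le _ _
    have hEcard : E.card ≤ n := by
      calc E.card ≤ Multiset.card A.charpoly.roots := Multiset.toFinset_card_le _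
        _ ≤ A.charpoly.natDegree := Polynomial.card_roots' _
        _ = Fintype.card (Fin n) := Matrix.charpoly_natDegree_eq_dim A
        _ = n := Fintype.card_fin n
    calc ((V ×ˢ E).image fun p => φ p.1 p.2).card ≤ (V ×ˢ E).card := Finset.card_image_le
      _ = V.card * E.card := Finset.card_product V E
      _ ≤ (((Finset.univ.image δ).erase 0).card + 1) * n :=
          Nat.mul_le_mul hVcard hEcard
  · intro t ht hdet
    have hMg : (fun i => if δ i = 0 then 1 / t else δ i * Real.cot (t * δ i))
        = fun i => gFun (δ i) t := rfl
    rw [hMg] at hdet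
    obtain ⟨x, hx0, hxk⟩ := Matrix.exists_mulVec_eq_zero_iff.mpr hdet
    obtain ⟨i₀, hi₀⟩ := Function.ne_iff.mp hx0
    set v : ℝ := δ i₀ with hv
    -- block structure of A
    have hblock : ∀ i j, δ i ≠ δ j → A i j = 0 := by
      intro i j hij
      have h1 := congrFun (congrFun hcomm i) j
      rw [Matrix.mul_apply_eq_vecMul] at h1
      have h2 : A i j * δ j = δ i * A i j := by
        have e1 : (A * Matrix.diagonal δ) i j = A i j * δ j := Matrix.mul_diagonal ..
        have e2 : (Matrix.diagonal δ * A) i j = δ i * A i j := Matrix.diagonal_mul ..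
        rw [← e1, ← e2, hcomm]
      have h3 : A i j * (δ j - δ i) = 0 := by ring_nf; linarith
      rcases mul_eq_zero.mp h3 with h | h
      · exact h
      · exact absurd (by linarith : δ i = δ j) hij
    have hAx : ∀ i, A.mulVec x i = gFun (δ i) t * x i := by
      intro i
      have h1 : (Matrix.diagonal (fun i => gFun (δ i) t)).mulVec x - A.mulVec x = 0 := by
        rw [← Matrix.sub_mulVec, hxk]
      have h2 := congrFun h1 i
      simp only [Pi.sub_apply, Pi.zero_apply, sub_eq_zero] at h2
      rw [← h2, Matrix.mulVec_diagonal]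
    set y : Fin n → ℝ := fun i => if δ i = v then x i else 0 with hy
    have hy0 : y ≠ 0 := by
      intro h
      apply hi₀
      have := congrFun h i₀
      simpa [hy, hv] using this
    have hAy : A.mulVec y = fun i => gFun v t * y i := by
      funext i
      by_cases hi : δ i = v
      · have hsum : A.mulVec y i = A.mulVec x i := by
          simp only [Matrix.mulVec, dotProduct]
          apply Finset.sum_congr rfl
          intro j _
          show A i j * y j = A i j * x j
          by_cases hj : δ j = v
          · simp [hy, hj]
          · rw [hblock i j (by rw [hi]; exact fun h => hj h.symm)]
            simp
        rw [hsum, hAx i, hi]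
        simp [hy, hi]
      · have hsum : A.mulVec y i = 0 := by
          simp only [Matrix.mulVec, dotProduct]
          apply Finset.sum_eq_zero
          intro j _
          show A i j * y j = 0
          by_cases hj : δ j = v
          · rw [hblock i j (by rw [hj]; exact hi)]; simp
          · simp [hy, hj]
        rw [hsum]
        simp [hy, hi]
    have hker : (Matrix.diagonal (fun _ : Fin n => gFun v t) - A).mulVec y = 0 := by
      funext i
      rw [Matrix.sub_mulVec]
      simp only [Pi.sub_apply, Pi.zero_apply, Matrix.mulVec_diagonal, hAy]
      ring
    have hdet2 : (Matrix.diagonal (fun _ : Fin n => gFun v t) - A).det = 0 :=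
      Matrix.exists_mulVec_eq_zero_iff.mp ⟨y, hy0, hker⟩
    have hroot : gFun v t ∈ E := by
      rw [hEdef, Multiset.mem_toFinset, Polynomial.mem_roots (A.charpoly_monic.ne_zero)]
      rw [Polynomial.IsRoot.def, charpolyEvalAux]
      exact hdet2
    have hvV : v ∈ V := Finset.mem_insert_of_mem (Finset.mem_image_of_mem δ (Finset.mem_univ i₀))
    have hex : ∃ t' ∈ Set.Ioo (0:ℝ) (Real.pi / B), gFun v t' = gFun v t := ⟨t, ht, rfl⟩
    have hφeq : φ v (gFun v t) = t := by
      rw [hφ]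
      simp only [dif_pos hex]
      obtain ⟨hmem, heq⟩ := hex.choose_spec
      exact gInjOn B v (hδ0 i₀) (hδB i₀) hmem ht heq
    exact Finset.mem_image.mpr ⟨(v, gFun v t),
      Finset.mem_product.mpr ⟨hvV, hroot⟩, hφeq⟩
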